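/- arXiv:1806.05472 — 3 statements merged into one kernel-verified Lean document; each statement's English description precedes it below -/
import Mathlib

section
/- Let A ∈ ℝ^{n×n} and B ∈ ℝ^{n×m} with (A,B) controllable and B ≠ 0. Write the singular value decomposition B = U [Σ 0; 0 0] Hᵀ where Σ ∈ ℝ^{r×r} is invertible diagonal (r = rank B < n), and partition U = [Ũ Ū] with Ũ ∈ ℝ^{n×r}, Ū ∈ ℝ^{n×(n−r)}. Then the pair (Φ, Γ) := (Ūᵀ A Ū, Ūᵀ A Ũ) is controllable, and moreover Γ ≠ 0 when n − r > 0. -/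
open Matrix Module

set_option linter.unusedSectionVars false

section aux
variable {α β γ : Type*} [Fintype α] [Fintype β] [Fintype γ]

lemma range_mulVecLin_fromColumns (X : Matrix γ α ℂ) (Y : Matrix γ β ℂ) :
    LinearMap.range (fromCols X Y).mulVecLin
      = LinearMap.range X.mulVecLin ⊔ LinearMap.range Y.mulVecLin := by
  apply le_antisymm
  · rintro x ⟨v, rfl⟩
    have hv : v = Sum.elim (v ∘ Sum.inl) (v ∘ Sum.inr) := by
      funext i; cases i <;> rfl
    rw [mulVecLin_apply, hv, fromCols_mulVec_sumElim]
    exact Submodule.add_mem _ (Submodule.mem_sup_left ⟨_, rfl⟩)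
      (Submodule.mem_sup_right ⟨_, rfl⟩)
  · rw [sup_le_iff]
    constructor
    · rintro x ⟨v, rfl⟩
      exact ⟨Sum.elim v 0, by simp [mulVecLin_apply, fromCols_mulVec_sumElim]⟩
    · rintro x ⟨v, rfl⟩
      exact ⟨Sum.elim 0 v, by simp [mulVecLin_apply, fromCols_mulVec_sumElim]⟩

lemma rank_fromColumns_swap (X : Matrix γ α ℂ) (Y : Matrix γ β ℂ) :
    (fromCols X Y).rank = (fromCols Y X).rank := by
  rw [Matrix.rank, Matrix.rank, range_mulVecLin_fromColumns, range_mulVecLin_fromColumns,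
    sup_comm]

lemma rank_fromColumns_zero_right (X : Matrix γ α ℂ) :
    (fromCols X (0 : Matrix γ β ℂ)).rank = X.rank := by
  rw [Matrix.rank, Matrix.rank, range_mulVecLin_fromColumns, mulVecLin_zero,
    LinearMap.range_zero, sup_bot_eq]

lemma rank_fromColumns_neg_left (X : Matrix γ α ℂ) (Y : Matrix γ β ℂ) :
    (fromCols (-X) Y).rank = (fromCols X Y).rank := by
  have h : (-X).mulVecLin = -X.mulVecLin := by
    ext v i; simp [mulVecLin_apply, neg_mulVec]
  rw [Matrix.rank, Matrix.rank, range_mulVecLin_fromColumns, range_mulVecLin_fromColumns, h,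
    LinearMap.range_neg]

lemma rank_fromColumns_le (X : Matrix γ α ℂ) (Y : Matrix γ β ℂ) :
    (fromCols X Y).rank ≤ X.rank + Y.rank := by
  rw [Matrix.rank, Matrix.rank, Matrix.rank, range_mulVecLin_fromColumns]
  exact Submodule.finrank_add_le_finrank_add_finrank _ _

lemma rank_le_card_add_rank_submatrix_inr (M : Matrix (α ⊕ β) γ ℂ) :
    M.rank ≤ Fintype.card α + (M.submatrix Sum.inr id).rank := by
  have hM : M = fromRows (M.submatrix Sum.inl id) (M.submatrix Sum.inr id) := by
    ext i j; cases i <;> rfl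
  calc M.rank = Mᵀ.rank := (rank_transpose M).symm
    _ = (fromCols (M.submatrix Sum.inl id)ᵀ (M.submatrix Sum.inr id)ᵀ).rank := by
        conv_lhs => rw [hM, transpose_fromRows]
    _ ≤ (M.submatrix Sum.inl id)ᵀ.rank + (M.submatrix Sum.inr id)ᵀ.rank :=
        rank_fromColumns_le _ _
    _ ≤ Fintype.card α + (M.submatrix Sum.inr id).rank := by
        rw [rank_transpose, rank_transpose]
        exact Nat.add_le_add_right (rank_le_card_height _) _
end aux

/-- PBH test for controllability of the pair `(Φ, Γ)`. -/
def PBHControllable {k m : Type*} [Fintype k] [Fintype m] [DecidableEq k]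
    (Φ : Matrix k k ℝ) (Γ : Matrix k m ℝ) : Prop :=
  ∀ lam : ℂ,
    (Matrix.fromCols (lam • (1 : Matrix k k ℂ) - Φ.map (fun a => (a : ℂ)))
      (Γ.map (fun a => (a : ℂ)))).rank = Fintype.card k

/-- one SVD step preserves controllability, and the new input
matrix is nonzero when `n - r > 0`.  Here `n = r + q` and the columns of the
input matrix are partitioned as `m = r + m'`. -/
theorem svd_step_controllable (r q m' : ℕ) (hr : 0 < r)
    (A : Matrix (Fin r ⊕ Fin q) (Fin r ⊕ Fin q) ℝ)
    (B : Matrix (Fin r ⊕ Fin q) (Fin r ⊕ Fin m') ℝ)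
    (hBne : B ≠ 0)
    (U : Matrix (Fin r ⊕ Fin q) (Fin r ⊕ Fin q) ℝ)
    (hU : Uᵀ * U = 1 ∧ U * Uᵀ = 1)
    (H : Matrix (Fin r ⊕ Fin m') (Fin r ⊕ Fin m') ℝ)
    (hH : Hᵀ * H = 1 ∧ H * Hᵀ = 1)
    (S : Matrix (Fin r) (Fin r) ℝ)
    (hSdiag : ∃ d : Fin r → ℝ, S = Matrix.diagonal d) (hS : IsUnit S)
    (hB : B = U * (Matrix.fromBlocks S 0 0 0 : Matrix (Fin r ⊕ Fin q) (Fin r ⊕ Fin m') ℝ) * Hᵀ)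
    (hrank : B.rank = r) (hrn : r < r + q)
    (hctrb : PBHControllable A B) :
    PBHControllable ((U.submatrix id Sum.inr)ᵀ * A * U.submatrix id Sum.inr)
        ((U.submatrix id Sum.inr)ᵀ * A * U.submatrix id Sum.inl) ∧
      (0 < q → (U.submatrix id Sum.inr)ᵀ * A * U.submatrix id Sum.inl ≠ 0) := by
  obtain ⟨hU1, hU2⟩ := hU
  obtain ⟨hH1, hH2⟩ := hH
  have hc : (fun a : ℝ => (a : ℂ)) = ⇑Complex.ofRealHom := rfl
  set c : ℝ →+* ℂ := Complex.ofRealHom with hcdef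
  set Φ : Matrix (Fin q) (Fin q) ℝ := (U.submatrix id Sum.inr)ᵀ * A * U.submatrix id Sum.inr
    with hΦdef
  set Γ : Matrix (Fin q) (Fin r) ℝ := (U.submatrix id Sum.inr)ᵀ * A * U.submatrix id Sum.inl
    with hΓdef
  -- real block identities
  set P : Matrix (Fin r ⊕ Fin q) (Fin r ⊕ Fin q) ℝ := Uᵀ * A * U with hPdef
  have hPΦ : P.submatrix Sum.inr Sum.inr = Φ := by
    ext i j
    simp [hPdef, hΦdef, Matrix.mul_apply, Finset.sum_mul]
  have hPΓ : P.submatrix Sum.inr Sum.inl = Γ := by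
    ext i j
    simp [hPdef, hΓdef, Matrix.mul_apply, Finset.sum_mul]
  -- complex lifts
  have hU1c : (Uᵀ.map c) * (U.map c) = 1 := by
    rw [← Matrix.map_mul, hU1, Matrix.map_one c c.map_zero c.map_one]
  have hU2c : (U.map c) * (Uᵀ.map c) = 1 := by
    rw [← Matrix.map_mul, hU2, Matrix.map_one c c.map_zero c.map_one]
  have hH1c : (Hᵀ.map c) * (H.map c) = 1 := by
    rw [← Matrix.map_mul, hH1, Matrix.map_one c c.map_zero c.map_one]
  have hdetUT : IsUnit (Uᵀ.map c).det :=
    IsUnit.of_mul_eq_one _ (by rw [← Matrix.det_mul, hU1c, Matrix.det_one])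
  have hdetU : IsUnit (U.map c).det :=
    IsUnit.of_mul_eq_one _ (by rw [← Matrix.det_mul, hU2c, Matrix.det_one])
  have hdetH : IsUnit (H.map c).det := by
    have hH2c : (H.map c) * (Hᵀ.map c) = 1 := by
      rw [← Matrix.map_mul, hH2, Matrix.map_one c c.map_zero c.map_one]
    exact IsUnit.of_mul_eq_one _ (by rw [← Matrix.det_mul, hH2c, Matrix.det_one])
  have hFc : (Matrix.fromBlocks S 0 0 0 : Matrix (Fin r ⊕ Fin q) (Fin r ⊕ Fin m') ℝ).map c
      = Matrix.fromBlocks (S.map c) 0 0 0 := by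
    rw [Matrix.fromBlocks_map, Matrix.map_zero _ c.map_zero, Matrix.map_zero _ c.map_zero,
      Matrix.map_zero _ c.map_zero]
  have hBc : B.map c = (U.map c) * (Matrix.fromBlocks (S.map c) 0 0 0 :
      Matrix (Fin r ⊕ Fin q) (Fin r ⊕ Fin m') ℂ) * (Hᵀ.map c) := by
    rw [hB, Matrix.map_mul, Matrix.map_mul, hFc]

  -- the key multiplication identity
  have key : ∀ lam : ℂ,
      (Uᵀ.map c) * (fromCols (lam • (1 : Matrix (Fin r ⊕ Fin q) (Fin r ⊕ Fin q) ℂ) - A.map c)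
        (B.map c)) * (fromBlocks (U.map c) 0 0 (H.map c))
      = fromCols (lam • 1 - P.map c) (fromBlocks (S.map c) 0 0 0 :
        Matrix (Fin r ⊕ Fin q) (Fin r ⊕ Fin m') ℂ) := by
    intro lam
    rw [mul_fromCols, fromCols_mul_fromBlocks, Matrix.fromCols_ext_iff]
    constructor
    · rw [Matrix.mul_zero, add_zero, Matrix.mul_sub, Matrix.sub_mul, Matrix.mul_smul,
        Matrix.mul_one, Matrix.smul_mul, hU1c, hPdef, Matrix.map_mul, Matrix.map_mul]
    · rw [Matrix.mul_zero, zero_add, hBc]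
      calc Uᵀ.map c * (U.map c * (fromBlocks (S.map c) 0 0 0 :
              Matrix (Fin r ⊕ Fin q) (Fin r ⊕ Fin m') ℂ) * Hᵀ.map c) * H.map c
          = (Uᵀ.map c * U.map c) * (fromBlocks (S.map c) 0 0 0 :
              Matrix (Fin r ⊕ Fin q) (Fin r ⊕ Fin m') ℂ) * (Hᵀ.map c * H.map c) := by
            rw [Matrix.mul_assoc, Matrix.mul_assoc, Matrix.mul_assoc, Matrix.mul_assoc,
              ← Matrix.mul_assoc (Uᵀ.map c)]
        _ = _ := by rw [hU1c, hH1c, Matrix.one_mul, Matrix.mul_one]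
  have hmain : PBHControllable Φ Γ := by
    intro lam
    set M : Matrix (Fin r ⊕ Fin q) ((Fin r ⊕ Fin q) ⊕ (Fin r ⊕ Fin m')) ℂ :=
      fromCols (lam • 1 - P.map c)
        (fromBlocks (S.map c) 0 0 0 : Matrix (Fin r ⊕ Fin q) (Fin r ⊕ Fin m') ℂ) with hMdef
    have h1 : M.rank = r + q := by
      rw [hMdef]
      rw [← key lam, rank_mul_eq_left_of_isUnit_det _ _
          (by rw [Matrix.det_fromBlocks_zero₂₁]; exact hdetU.mul hdetH),
        rank_mul_eq_right_of_isUnit_det _ _ hdetUT]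
      have := hctrb lam
      rw [hc] at this
      simpa using this
    set N := M.submatrix Sum.inr id with hNdef
    have hNle : N.rank ≤ q := le_trans (rank_le_card_height _) (by simp)
    have hNge : q ≤ N.rank := by
      have h2 := rank_le_card_add_rank_submatrix_inr M
      rw [h1, ← hNdef] at h2
      simp only [Fintype.card_fin] at h2
      omega
    have hNeq : N = fromCols (fromCols (-(Γ.map c)) (lam • 1 - Φ.map c)) 0 := by
      rw [hNdef, hMdef]
      ext i j
      rcases j with (j | j)
      · rcases j with (j | j)
        · simp [Matrix.one_apply, ← hPΓ, Matrix.map_apply]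
        · simp [Matrix.one_apply, ← hPΦ, Matrix.map_apply]
      · rcases j with (j | j) <;> simp
    have : (fromCols (lam • (1 : Matrix (Fin q) (Fin q) ℂ) - Φ.map c) (Γ.map c)).rank = q := by
      have e1 : (fromCols (-(Γ.map c)) (lam • 1 - Φ.map c)).rank = q := by
        have := hNeq ▸ (hNle.antisymm hNge)
        rwa [rank_fromColumns_zero_right] at this
      rw [rank_fromColumns_swap]
      rwa [rank_fromColumns_neg_left] at e1
    rw [hc]
    simpa using this
  refine ⟨hmain, ?_⟩
  intro hq hΓ0
  haveI : Nonempty (Fin q) := Fin.pos_iff_nonempty.mp hq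
  have hrkΦ : ∀ lam : ℂ, (lam • (1 : Matrix (Fin q) (Fin q) ℂ) - Φ.map c).rank = q := by
    intro lam
    have := hmain lam
    rw [hc] at this
    rw [hΓ0] at this
    simp only [Fintype.card_fin] at this
    rw [show ((0 : Matrix (Fin q) (Fin r) ℝ).map ⇑c) = 0 by ext i j; simp] at this
    rwa [rank_fromColumns_zero_right] at this
  -- eigenvalue of Φ.map c gives a contradiction
  obtain ⟨μ, hμ⟩ := Module.End.exists_eigenvalue (Φ.map c).mulVecLin
  obtain ⟨v, hv⟩ := hμ.exists_hasEigenvector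
  have hker : (μ • (1 : Matrix (Fin q) (Fin q) ℂ) - Φ.map c).mulVecLin v = 0 := by
    have happ := hv.apply_eq_smul
    simp only [mulVecLin_apply] at happ ⊢
    rw [Matrix.sub_mulVec, smul_mulVec, Matrix.one_mulVec, happ, sub_self]
  have hrn2 := LinearMap.finrank_range_add_finrank_ker
    (μ • (1 : Matrix (Fin q) (Fin q) ℂ) - Φ.map c).mulVecLin
  rw [finrank_fin_fun] at hrn2
  have hkerpos : 0 < finrank ℂ
      (LinearMap.ker (μ • (1 : Matrix (Fin q) (Fin q) ℂ) - Φ.map c).mulVecLin) := by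
    rw [finrank_pos_iff]
    exact ⟨⟨⟨v, hker⟩, 0, by simpa [Subtype.ext_iff] using hv.right⟩⟩
  have hrkdef : (μ • (1 : Matrix (Fin q) (Fin q) ℂ) - Φ.map c).rank
      = finrank ℂ (LinearMap.range (μ • (1 : Matrix (Fin q) (Fin q) ℂ) - Φ.map c).mulVecLin) :=
    rfl
  have := hrkΦ μ
  rw [hrkdef] at this
  omega
end

section
/- Let A ∈ ℝ^{n×n}, B ∈ ℝ^{n×m}, and suppose (A,B) is controllable with B ≠ 0. Define recursively Φ₀ = A, Γ₀ = B, and, as long as Γ_j does not have full row rank and Γ_j ≠ 0, let Γ_j = U_{j+1}[Σ_j 0; 0 0]H_{j+1}ᵀ be an SVD with Σ_j invertible, U_{j+1} = [Ũ_{j+1} Ū_{j+1}], and set Φ_{j+1} = Ū_{j+1}ᵀ Φ_j Ū_{j+1}, Γ_{j+1} = Ū_{j+1}ᵀ Φ_j Ũ_{j+1}. Then the recursion terminates: there exists a finite l such that Γ_l has full row rank, and for every 0 ≤ j ≤ l the pair (Φ_j, Γ_j) is controllable. -/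
open Matrix

private lemma rank_eq_card_iff_forall_vecMul {K : Type*} [Field K] {k n : Type*}
    [Fintype k] [Fintype n] (M : Matrix k n K) :
    M.rank = Fintype.card k ↔ ∀ z : k → K, z ᵥ* M = 0 → z = 0 := by
  have hdef : M.rank = Module.finrank K (LinearMap.range M.vecMulLinear) := by
    rw [← M.rank_transpose, Matrix.rank, Matrix.mulVecLin_transpose]
  have hrn := LinearMap.finrank_range_add_finrank_ker M.vecMulLinear
  rw [Module.finrank_fintype_fun_eq_card] at hrn
  constructor
  · intro h z hz
    have hker0 : Module.finrank K (LinearMap.ker M.vecMulLinear) = 0 := by omega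
    have hbot : LinearMap.ker M.vecMulLinear = ⊥ := Submodule.finrank_eq_zero.mp hker0
    have hz' : z ∈ LinearMap.ker M.vecMulLinear := by
      simpa [LinearMap.mem_ker, Matrix.vecMulLinear_apply] using hz
    simpa [hbot] using hz'
  · intro h
    have hbot : LinearMap.ker M.vecMulLinear = ⊥ := by
      rw [Submodule.eq_bot_iff]
      intro z hz
      exact h z (by simpa [LinearMap.mem_ker, Matrix.vecMulLinear_apply] using hz)
    rw [hbot] at hrn
    simp at hrn
    omega

private lemma vecMul_smul_one {k : Type*} [Fintype k] [DecidableEq k]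
    (lam : ℂ) (v : k → ℂ) : v ᵥ* (lam • (1 : Matrix k k ℂ)) = lam • v := by
  ext i
  simp [Matrix.smul_one_eq_diagonal, Matrix.vecMul_diagonal, mul_comm]

private lemma gamma_ne_zero_of_pbh {kk pp : ℕ} (Φ : Matrix (Fin kk) (Fin kk) ℝ)
    (Γ : Matrix (Fin kk) (Fin pp) ℝ) (hk : 0 < kk)
    (hpbh : PBHControllable Φ Γ) : Γ ≠ 0 := by
  intro hΓ
  set Φ' : Matrix (Fin kk) (Fin kk) ℂ := Φ.map (fun a => (a : ℂ)) with hΦ'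
  haveI : Nontrivial (Fin kk → ℂ) := by
    haveI : Nonempty (Fin kk) := ⟨⟨0, hk⟩⟩
    infer_instance
  obtain ⟨μ, hμ⟩ := Module.End.exists_eigenvalue (Matrix.mulVecLin Φ'ᵀ)
  obtain ⟨v, hv⟩ := hμ.exists_hasEigenvector
  have hvΦ : v ᵥ* Φ' = μ • v := by
    simpa [Matrix.mulVecLin_apply, Matrix.mulVec_transpose] using hv.apply_eq_smul
  have h0 : v ᵥ* (μ • (1 : Matrix (Fin kk) (Fin kk) ℂ) - Φ') = 0 := by
    rw [Matrix.vecMul_sub, vecMul_smul_one, hvΦ, sub_self]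
  have hrank := (rank_eq_card_iff_forall_vecMul _).mp (hpbh μ)
  have hv0 : v = 0 := by
    apply hrank
    rw [Matrix.vecMul_fromCols, ← hΦ', h0, hΓ]
    have hz : (0 : Matrix (Fin kk) (Fin pp) ℝ).map (fun a => (a : ℂ)) = 0 := by
      ext i j; simp
    rw [hz, Matrix.vecMul_zero]
    ext (i | i) <;> simp
  exact hv.right hv0

set_option maxHeartbeats 1000000 in
private lemma pbh_step {kj kj1 pj1 pj : ℕ}
    (Φj : Matrix (Fin kj) (Fin kj) ℝ) (Γj : Matrix (Fin kj) (Fin pj) ℝ)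
    (Ut : Matrix (Fin kj) (Fin pj1) ℝ) (Ub : Matrix (Fin kj) (Fin kj1) ℝ)
    (S : Matrix (Fin pj1) (Fin pj1) ℝ) (W : Matrix (Fin pj1) (Fin pj) ℝ)
    (hUbUb : Ubᵀ * Ub = 1) (hUtUb : Utᵀ * Ub = 0)
    (hsum : Ut * Utᵀ + Ub * Ubᵀ = 1) (hfac : Γj = Ut * S * W)
    (hpbh : PBHControllable Φj Γj) :
    PBHControllable (Ubᵀ * Φj * Ub) (Ubᵀ * Φj * Ut) := by
  have mapmul : ∀ {a b c : ℕ} (M : Matrix (Fin a) (Fin b) ℝ) (N : Matrix (Fin b) (Fin c) ℝ),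
      (M * N).map (fun x : ℝ => (x : ℂ)) =
        M.map (fun x => (x : ℂ)) * N.map (fun x => (x : ℂ)) := by
    intro a b c M N
    exact Matrix.map_mul (f := Complex.ofRealHom)
  have maptr : ∀ {a b : ℕ} (M : Matrix (Fin a) (Fin b) ℝ),
      (Mᵀ).map (fun x : ℝ => (x : ℂ)) = (M.map (fun x => (x : ℂ)))ᵀ := by
    intro a b M; exact Matrix.transpose_map
  have mapone : ∀ {a : ℕ},
      (1 : Matrix (Fin a) (Fin a) ℝ).map (fun x : ℝ => (x : ℂ)) = 1 := by
    intro a; exact Matrix.map_one _ (by simp) (by simp)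
  have mapzero : ∀ {a b : ℕ},
      (0 : Matrix (Fin a) (Fin b) ℝ).map (fun x : ℝ => (x : ℂ)) = 0 := by
    intro a b; ext i j; simp
  set A := Φj.map (fun x : ℝ => (x : ℂ)) with hA
  set T := Ut.map (fun x : ℝ => (x : ℂ)) with hT
  set B := Ub.map (fun x : ℝ => (x : ℂ)) with hB
  set S' := S.map (fun x : ℝ => (x : ℂ)) with hS
  set W' := W.map (fun x : ℝ => (x : ℂ)) with hW
  have hBB : Bᵀ * B = 1 := by
    rw [hB, ← maptr, ← mapmul, hUbUb, mapone]
  have hTB : Tᵀ * B = 0 := by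
    rw [hT, hB, ← maptr, ← mapmul, hUtUb, mapzero]
  have hBT : Bᵀ * T = 0 := by
    have h := congrArg Matrix.transpose hTB
    rwa [Matrix.transpose_mul, Matrix.transpose_transpose, Matrix.transpose_zero] at h
  have hsum' : T * Tᵀ + B * Bᵀ = 1 := by
    have h : (Ut * Utᵀ + Ub * Ubᵀ).map (fun x : ℝ => (x : ℂ)) =
        (1 : Matrix (Fin kj) (Fin kj) ℝ).map (fun x : ℝ => (x : ℂ)) := by rw [hsum]
    rw [Matrix.map_add (fun x : ℝ => (x : ℂ)) (by intro a b; push_cast; ring) (Ut * Utᵀ)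
      (Ub * Ubᵀ), mapmul, mapmul, maptr, maptr, mapone] at h
    rw [← hT, ← hB] at h
    exact h
  have hfac' : Γj.map (fun x : ℝ => (x : ℂ)) = T * S' * W' := by
    rw [hfac, mapmul, mapmul]
  intro lam
  rw [rank_eq_card_iff_forall_vecMul]
  intro z hz
  simp only [mapmul, maptr] at hz
  simp only [← hA, ← hB, ← hT] at hz
  rw [Matrix.vecMul_fromCols] at hz
  have h1 : z ᵥ* (lam • (1 : Matrix (Fin kj1) (Fin kj1) ℂ) - Bᵀ * A * B) = 0 := by
    ext i; exact congrFun hz (Sum.inl i)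
  have h2 : z ᵥ* (Bᵀ * A * T) = 0 := by
    ext i; exact congrFun hz (Sum.inr i)
  have h1' : z ᵥ* (Bᵀ * A * B) = lam • z := by
    rw [Matrix.vecMul_sub, vecMul_smul_one, sub_eq_zero] at h1
    exact h1.symm
  set w := z ᵥ* Bᵀ with hw
  have key : (w ᵥ* A) ᵥ* (T * Tᵀ) + (w ᵥ* A) ᵥ* (B * Bᵀ) = w ᵥ* A := by
    rw [← Matrix.vecMul_add, hsum', Matrix.vecMul_one]
  have kT : (w ᵥ* A) ᵥ* (T * Tᵀ) = 0 := by
    rw [← Matrix.vecMul_vecMul]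
    have hT0 : (w ᵥ* A) ᵥ* T = 0 := by
      rw [hw, Matrix.vecMul_vecMul, Matrix.vecMul_vecMul, ← Matrix.mul_assoc]
      exact h2
    rw [hT0, Matrix.zero_vecMul]
  have kB : (w ᵥ* A) ᵥ* (B * Bᵀ) = lam • w := by
    rw [← Matrix.vecMul_vecMul]
    have hB1 : (w ᵥ* A) ᵥ* B = lam • z := by
      rw [hw, Matrix.vecMul_vecMul, Matrix.vecMul_vecMul, ← Matrix.mul_assoc]
      exact h1'
    rw [hB1, Matrix.smul_vecMul, ← hw]
  have hwA : w ᵥ* A = lam • w := by rw [← key, kT, kB, zero_add]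
  have hwΓ : w ᵥ* (Γj.map (fun x : ℝ => (x : ℂ))) = 0 := by
    rw [hfac', hw, Matrix.vecMul_vecMul]
    have hzero : Bᵀ * (T * S' * W') = 0 := by
      rw [Matrix.mul_assoc T S' W', ← Matrix.mul_assoc, hBT, Matrix.zero_mul]
    rw [hzero, Matrix.vecMul_zero]
  have hw0 : w = 0 := by
    have hrank := (rank_eq_card_iff_forall_vecMul _).mp (hpbh lam)
    apply hrank
    rw [Matrix.vecMul_fromCols, ← hA]
    have hfirst : w ᵥ* (lam • (1 : Matrix (Fin kj) (Fin kj) ℂ) - A) = 0 := by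
      rw [Matrix.vecMul_sub, vecMul_smul_one, hwA, sub_self]
    rw [hfirst, hwΓ]
    ext (i | i) <;> simp
  have hz1 : z = z ᵥ* (Bᵀ * B) := by rw [hBB, Matrix.vecMul_one]
  rw [hz1, ← Matrix.vecMul_vecMul, ← hw, hw0, Matrix.zero_vecMul]

private lemma matrix_rank_zero_imp {m n : ℕ} (M : Matrix (Fin m) (Fin n) ℝ)
    (h : M.rank = 0) : M = 0 := by
  have hbot : LinearMap.range M.mulVecLin = ⊥ := Submodule.finrank_eq_zero.mp h
  ext i j
  have h0 : M.mulVecLin (Pi.single j 1) = 0 := by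
    have := hbot ▸ LinearMap.mem_range_self M.mulVecLin (Pi.single j 1)
    simpa using this
  have := congrFun h0 i
  simpa [Matrix.mulVecLin_apply, Matrix.mulVec_single] using this

/-- the repeated-SVD recursion `Φ₀ = A, Γ₀ = B`,
`Φ_{j+1} = Ū_{j+1}ᵀ Φ_j Ū_{j+1}`, `Γ_{j+1} = Ū_{j+1}ᵀ Φ_j Ũ_{j+1}` terminates
with a `Γ_l` of full row rank, and every intermediate pair `(Φ_j, Γ_j)` is
controllable.  The state dimensions are `k j` and input dimensions `p j`;
the SVD of `Γ_j` is written in thin form `Γ_j = Ũ Σ W` with `Σ` invertible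
diagonal, `Ũ` the orthonormal left singular columns, `W = [I 0] Hᵀ` having
orthonormal rows. -/
theorem svd_recursion_terminates (n m : ℕ) (k p : ℕ → ℕ)
    (hk0 : k 0 = n) (hp0 : p 0 = m)
    (Φ : ∀ j, Matrix (Fin (k j)) (Fin (k j)) ℝ)
    (Γ : ∀ j, Matrix (Fin (k j)) (Fin (p j)) ℝ)
    (hB0 : Γ 0 ≠ 0)
    (hctrb0 : PBHControllable (Φ 0) (Γ 0))
    (hstep : ∀ j, (Γ j).rank < k j → Γ j ≠ 0 →
      p (j + 1) = (Γ j).rank ∧ k (j + 1) + p (j + 1) = k j ∧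
      ∃ (Ut : Matrix (Fin (k j)) (Fin (p (j + 1))) ℝ)
        (Ub : Matrix (Fin (k j)) (Fin (k (j + 1))) ℝ)
        (S : Matrix (Fin (p (j + 1))) (Fin (p (j + 1))) ℝ)
        (W : Matrix (Fin (p (j + 1))) (Fin (p j)) ℝ),
        Utᵀ * Ut = 1 ∧ Ubᵀ * Ub = 1 ∧ Utᵀ * Ub = 0 ∧
        Ut * Utᵀ + Ub * Ubᵀ = 1 ∧
        (∃ d, S = Matrix.diagonal d) ∧ IsUnit S ∧ W * Wᵀ = 1 ∧
        Γ j = Ut * S * W ∧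
        Φ (j + 1) = Ubᵀ * Φ j * Ub ∧ Γ (j + 1) = Ubᵀ * Φ j * Ut) :
    ∃ l, (Γ l).rank = k l ∧ ∀ j ≤ l, PBHControllable (Φ j) (Γ j) := by
  suffices main : ∀ N j, k j ≤ N → PBHControllable (Φ j) (Γ j) →
      ∃ l, j ≤ l ∧ (Γ l).rank = k l ∧
        ∀ i, j ≤ i → i ≤ l → PBHControllable (Φ i) (Γ i) by
    obtain ⟨l, _, h1, h2⟩ := main (k 0) 0 le_rfl hctrb0
    exact ⟨l, h1, fun j hj => h2 j (Nat.zero_le _) hj⟩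
  intro N
  induction N with
  | zero =>
    intro j hj hpbh
    refine ⟨j, le_rfl, ?_, fun i h1 h2 => ?_⟩
    · have hle := Matrix.rank_le_card_height (Γ j)
      simp only [Fintype.card_fin] at hle
      omega
    · have : i = j := le_antisymm h2 h1
      subst this; exact hpbh
  | succ N ih =>
    intro j hj hpbh
    by_cases hfull : (Γ j).rank = k j
    · refine ⟨j, le_rfl, hfull, fun i h1 h2 => ?_⟩
      have : i = j := le_antisymm h2 h1
      subst this; exact hpbh
    · have hle : (Γ j).rank ≤ k j := by
        have hle := Matrix.rank_le_card_height (Γ j)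
        simpa only [Fintype.card_fin] using hle
      have hlt : (Γ j).rank < k j := lt_of_le_of_ne hle hfull
      have hkpos : 0 < k j := Nat.lt_of_le_of_lt (Nat.zero_le _) hlt
      have hne : Γ j ≠ 0 := gamma_ne_zero_of_pbh _ _ hkpos hpbh
      obtain ⟨hp, hk, Ut, Ub, S, W, hUtUt, hUbUb, hUtUb, hsum, hdiag, hS, hW, hfac, hΦ, hΓ⟩ :=
        hstep j hlt hne
      have hpbh' : PBHControllable (Φ (j + 1)) (Γ (j + 1)) := by
        rw [hΦ, hΓ]
        exact pbh_step _ _ _ _ _ _ hUbUb hUtUb hsum hfac hpbh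
      have hrankpos : 0 < (Γ j).rank := by
        rcases Nat.eq_zero_or_pos (Γ j).rank with h0 | hpos
        · exact absurd (matrix_rank_zero_imp _ h0) hne
        · exact hpos
      have hk1 : k (j + 1) ≤ N := by omega
      obtain ⟨l, hl1, hl2, hl3⟩ := ih (j + 1) hk1 hpbh'
      refine ⟨l, le_trans (Nat.le_succ j) hl1, hl2, fun i h1 h2 => ?_⟩
      rcases eq_or_lt_of_le h1 with heq | hgt
      · subst heq; exact hpbh
      · exact hl3 i hgt h2
end

section
/- Let Q(λ) = [λI − Φ, Γ] for Φ ∈ ℝ^{k×k}, Γ ∈ ℝ^{k×p} with rank Q(λ) = k for all λ ∈ ℂ (PBH controllability). Let Γ = U[Σ 0; 0 0]Hᵀ with Σ ∈ ℝ^{r×r} invertible, U = [Ũ Ū] orthogonal, and define Φ' = Ūᵀ Φ Ū, Γ' = Ūᵀ Φ Ũ. Then rank[λI − Φ', Γ'] = k − r for every λ ∈ ℂ. -/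
open Matrix

/-- A matrix has full row rank iff its left kernel is trivial. -/
lemma rank_eq_card_rows_iff {m n : Type*} [Fintype m] [Fintype n] [DecidableEq m] [DecidableEq n]
    (M : Matrix m n ℂ) :
    M.rank = Fintype.card m ↔ ∀ v : m → ℂ, v ᵥ* M = 0 → v = 0 := by
  have h2 := LinearMap.finrank_range_add_finrank_ker Mᵀ.mulVecLin
  rw [Module.finrank_fintype_fun_eq_card] at h2
  have hrt : M.rank = Module.finrank ℂ (LinearMap.range Mᵀ.mulVecLin) := by
    rw [← Matrix.rank_transpose, Matrix.rank]
  have h1 : M.rank = Fintype.card m ↔ LinearMap.ker Mᵀ.mulVecLin = ⊥ := by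
    constructor
    · intro h
      rw [h] at hrt
      have : Module.finrank ℂ (LinearMap.ker Mᵀ.mulVecLin) = 0 := by omega
      rwa [Submodule.finrank_eq_zero] at this
    · intro h
      rw [h] at h2
      simp only [finrank_bot, add_zero] at h2
      rw [hrt, h2]
  rw [h1, LinearMap.ker_eq_bot']
  constructor <;> intro h v hv
  · exact h v (by rw [Matrix.mulVecLin_apply, Matrix.mulVec_transpose]; exact hv)
  · exact h v (by rw [Matrix.mulVecLin_apply, Matrix.mulVec_transpose] at hv; exact hv)

/-- the PBH rank identity for one SVD reduction step.
Here the state dimension is `k = r + q` (indices `Fin r ⊕ Fin q`) and the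
input dimension `p = r + p'` (indices `Fin r ⊕ Fin p'`). -/
theorem pbh_rank_step (r q p' : ℕ) (hr : 0 < r) (hq : 0 < q)
    (Φ : Matrix (Fin r ⊕ Fin q) (Fin r ⊕ Fin q) ℝ)
    (Γ : Matrix (Fin r ⊕ Fin q) (Fin r ⊕ Fin p') ℝ)
    (hPBH : ∀ lam : ℂ,
      (Matrix.fromCols (lam • (1 : Matrix (Fin r ⊕ Fin q) (Fin r ⊕ Fin q) ℂ)
          - Φ.map (fun a => (a : ℂ))) (Γ.map (fun a => (a : ℂ)))).rank = r + q)
    (U : Matrix (Fin r ⊕ Fin q) (Fin r ⊕ Fin q) ℝ)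
    (hU : Uᵀ * U = 1 ∧ U * Uᵀ = 1)
    (H : Matrix (Fin r ⊕ Fin p') (Fin r ⊕ Fin p') ℝ)
    (hH : Hᵀ * H = 1 ∧ H * Hᵀ = 1)
    (S : Matrix (Fin r) (Fin r) ℝ)
    (hSdiag : ∃ d : Fin r → ℝ, S = Matrix.diagonal d) (hS : IsUnit S)
    (hΓ : Γ = U * (Matrix.fromBlocks S 0 0 0 : Matrix (Fin r ⊕ Fin q) (Fin r ⊕ Fin p') ℝ) * Hᵀ)
    (hrank : Γ.rank = r) :
    ∀ lam : ℂ,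
      (Matrix.fromCols (lam • (1 : Matrix (Fin q) (Fin q) ℂ)
          - ((U.submatrix id Sum.inr)ᵀ * Φ * U.submatrix id Sum.inr).map (fun a => (a : ℂ)))
        (((U.submatrix id Sum.inr)ᵀ * Φ * U.submatrix id Sum.inl).map (fun a => (a : ℂ)))).rank
        = (r + q) - r := by
  intro lam
  -- complexified matrices
  set f : ℝ → ℂ := fun a => (a : ℂ) with hf
  have hfh : f = ⇑(Complex.ofRealHom) := rfl
  set Φc : Matrix (Fin r ⊕ Fin q) (Fin r ⊕ Fin q) ℂ := Φ.map f with hΦc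
  set Γc : Matrix (Fin r ⊕ Fin q) (Fin r ⊕ Fin p') ℂ := Γ.map f with hΓc
  set Uc : Matrix (Fin r ⊕ Fin q) (Fin r ⊕ Fin q) ℂ := U.map f with hUc
  -- sub-blocks of U over ℂ
  set Ubc : Matrix (Fin r ⊕ Fin q) (Fin q) ℂ := Uc.submatrix id Sum.inr with hUbc
  set Utc : Matrix (Fin r ⊕ Fin q) (Fin r) ℂ := Uc.submatrix id Sum.inl with hUtc
  have hmapsubr : ((U.submatrix id Sum.inr)).map f = Ubc := rfl
  have hmapsubl : ((U.submatrix id Sum.inl)).map f = Utc := rfl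
  -- orthogonality over ℂ
  have hUc1 : Ucᵀ * Uc = 1 := by
    rw [hUc, ← Matrix.transpose_map, hfh, ← Matrix.map_mul, hU.1]
    exact Matrix.map_one _ (map_zero _) (map_one _)
  have hUc2 : Uc * Ucᵀ = 1 := by
    rw [hUc, ← Matrix.transpose_map, hfh, ← Matrix.map_mul, hU.2]
    exact Matrix.map_one _ (map_zero _) (map_one _)
  -- Ū is an isometry: Ūᵀ Ū = 1
  have hbb : Ubcᵀ * Ubc = 1 := by
    ext i j
    have h := congrFun (congrFun hUc1 (Sum.inr i)) (Sum.inr j)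
    simp only [Matrix.mul_apply, Matrix.transpose_apply, Matrix.submatrix_apply, id_eq,
      hUbc] at h ⊢
    rw [h]
    by_cases hij : i = j <;> simp [Matrix.one_apply, hij]
  -- key: Ūᵀ Γ = 0 over ℂ
  have hUGr : Uᵀ * Γ
      = (Matrix.fromBlocks S 0 0 0 : Matrix (Fin r ⊕ Fin q) (Fin r ⊕ Fin p') ℝ) * Hᵀ := by
    rw [hΓ, ← Matrix.mul_assoc, ← Matrix.mul_assoc, hU.1, Matrix.one_mul]
  have hbGr : (U.submatrix id Sum.inr)ᵀ * Γ = 0 := by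
    ext i j
    have hz : ((Matrix.fromBlocks S 0 0 0 :
        Matrix (Fin r ⊕ Fin q) (Fin r ⊕ Fin p') ℝ) * Hᵀ) (Sum.inr i) j = 0 := by
      rw [Matrix.mul_apply]
      apply Finset.sum_eq_zero
      intro b _
      rcases b with b | b <;> simp
    have h := congrFun (congrFun hUGr (Sum.inr i)) j
    rw [hz] at h
    simpa [Matrix.mul_apply] using h
  have hUG : Ubcᵀ * Γc = 0 := by
    have h0 : (((U.submatrix id Sum.inr)ᵀ * Γ).map f) = 0 := by
      rw [hbGr]; ext i j; simp [hf]
    rw [hfh, Matrix.map_mul, ← hfh, Matrix.transpose_map, hmapsubr] at h0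
    exact h0
  -- the statement's matrices, rewritten through Uc
  have hΦ'c : ((U.submatrix id Sum.inr)ᵀ * Φ * U.submatrix id Sum.inr).map f
      = Ubcᵀ * Φc * Ubc := by
    rw [hfh, Matrix.map_mul, Matrix.map_mul, ← hfh, Matrix.transpose_map, hmapsubr]
  have hΓ'c : ((U.submatrix id Sum.inr)ᵀ * Φ * U.submatrix id Sum.inl).map f
      = Ubcᵀ * Φc * Utc := by
    rw [hfh, Matrix.map_mul, Matrix.map_mul, ← hfh, Matrix.transpose_map, hmapsubr, hmapsubl]
  -- reduce goal to triviality of the left kernel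
  have hsub : (r + q) - r = Fintype.card (Fin q) := by rw [Fintype.card_fin]; omega
  rw [hΦ'c, hΓ'c, hsub, rank_eq_card_rows_iff]
  intro w hw
  -- split the kernel condition
  rw [Matrix.vecMul_fromCols] at hw
  have h1 : w ᵥ* (lam • (1 : Matrix (Fin q) (Fin q) ℂ) - Ubcᵀ * Φc * Ubc) = 0 :=
    funext fun j => congrFun hw (Sum.inl j)
  have h2 : w ᵥ* (Ubcᵀ * Φc * Utc) = 0 :=
    funext fun j => congrFun hw (Sum.inr j)
  have h1' : w ᵥ* (Ubcᵀ * Φc * Ubc) = lam • w := by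
    rw [Matrix.vecMul_sub] at h1
    have hsm : w ᵥ* (lam • (1 : Matrix (Fin q) (Fin q) ℂ)) = lam • w := by
      funext j
      simp [Matrix.vecMul, dotProduct, Matrix.one_apply, mul_ite,
        Finset.sum_ite_eq, mul_comm]
    rw [hsm] at h1
    exact (sub_eq_zero.mp h1).symm
  -- the candidate left null vector of the full PBH matrix
  set v : (Fin r ⊕ Fin q) → ℂ := w ᵥ* Ubcᵀ with hv
  have hu : v ᵥ* (Φc * Uc) = Sum.elim (0 : Fin r → ℂ) (lam • w) := by
    funext x
    have hvm : v ᵥ* (Φc * Uc) = w ᵥ* (Ubcᵀ * Φc * Uc) := by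
      rw [hv, Matrix.vecMul_vecMul, Matrix.mul_assoc]
    rw [hvm]
    cases x with
    | inl j =>
      have hcol : (w ᵥ* (Ubcᵀ * Φc * Uc)) (Sum.inl j) = (w ᵥ* (Ubcᵀ * Φc * Utc)) j := by
        simp only [Matrix.vecMul, dotProduct, Matrix.mul_apply, hUtc,
          Matrix.submatrix_apply, id_eq]
      rw [hcol, h2]
      simp
    | inr j =>
      have hcol : (w ᵥ* (Ubcᵀ * Φc * Uc)) (Sum.inr j) = (w ᵥ* (Ubcᵀ * Φc * Ubc)) j := by
        simp only [Matrix.vecMul, dotProduct, Matrix.mul_apply, hUbc,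
          Matrix.submatrix_apply, id_eq]
      rw [hcol, h1']
      simp
  have hvΦ : v ᵥ* Φc = lam • v := by
    have hstep : v ᵥ* Φc = v ᵥ* (Φc * (Uc * Ucᵀ)) := by rw [hUc2, Matrix.mul_one]
    rw [hstep, ← Matrix.mul_assoc, ← Matrix.vecMul_vecMul, hu]
    funext j
    rw [hv]
    simp [Matrix.vecMul, dotProduct, Fintype.sum_sum_type, Finset.mul_sum, mul_assoc,
      hUbc, Matrix.submatrix_apply]
  -- apply the PBH condition
  have hcard : Fintype.card (Fin r ⊕ Fin q) = r + q := by simp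
  have hP := (rank_eq_card_rows_iff
      (Matrix.fromCols (lam • (1 : Matrix (Fin r ⊕ Fin q) (Fin r ⊕ Fin q) ℂ) - Φc) Γc)).mp
      (by rw [hcard]; exact hPBH lam)
  have hv0 : v = 0 := by
    apply hP
    rw [Matrix.vecMul_fromCols]
    have e1 : v ᵥ* (lam • (1 : Matrix (Fin r ⊕ Fin q) (Fin r ⊕ Fin q) ℂ) - Φc) = 0 := by
      rw [Matrix.vecMul_sub, hvΦ]
      have hsm : v ᵥ* (lam • (1 : Matrix (Fin r ⊕ Fin q) (Fin r ⊕ Fin q) ℂ)) = lam • v := by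
        funext j
        simp [Matrix.vecMul, dotProduct, Matrix.one_apply, mul_ite,
          Finset.sum_ite_eq, mul_comm]
      rw [hsm, sub_self]
    have e2 : v ᵥ* Γc = 0 := by
      rw [hv, Matrix.vecMul_vecMul, hUG, Matrix.vecMul_zero]
    rw [e1, e2]
    funext x
    cases x <;> simp
  have hwv : w = v ᵥ* Ubc := by
    rw [hv, Matrix.vecMul_vecMul, hbb, Matrix.vecMul_one]
  rw [hwv, hv0, Matrix.zero_vecMul]
end
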